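/- Flat base change inclusion: if R → A → B are ring morphisms and R' is a flat R-algebra, then the image of A*_{B,R} ⊗_R R' in B ⊗_R R' is contained in (A ⊗_R R')*_{B ⊗_R R', R'}. -/
import Mathlib

open TensorProduct

/-- Integral closure of an ideal: `x` satisfies an equation of integral dependence over `I`. -/
def Ideal.intClosure {S : Type*} [CommRing S] (I : Ideal S) : Set S :=
  {x | ∃ n : ℕ, 0 < n ∧ ∃ a : ℕ → S, (∀ i ∈ Finset.Icc 1 n, a i ∈ I ^ i) ∧
      x ^ n + ∑ i ∈ Finset.Icc 1 n, a i * x ^ (n - i) = 0}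

section helpers
open Polynomial

theorem Ideal.zero_mem_intClosure {S : Type*} [CommRing S] (I : Ideal S) :
    (0 : S) ∈ I.intClosure :=
  ⟨1, one_pos, fun _ => 0, fun _ _ => zero_mem _, by simp⟩

set_option synthInstance.maxHeartbeats 1000000 in
theorem Ideal.mem_intClosure_iff {S : Type*} [CommRing S] (I : Ideal S) (x : S) :
    x ∈ I.intClosure ↔ IsIntegral (reesAlgebra I) (monomial 1 x : S[X]) := by
  constructor
  · rintro ⟨n, hn, a, ha, heq⟩
    set a' : ℕ → reesAlgebra I := fun i =>
      if h : i ∈ Finset.Icc 1 n then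
        ⟨monomial i (a i), reesAlgebra.monomial_mem.mpr (ha i h)⟩ else 0 with ha'
    refine ⟨X ^ n + ∑ i ∈ Finset.Icc 1 n, C (a' i) * X ^ (n - i), ?_, ?_⟩
    · apply monic_X_pow_add
      apply lt_of_le_of_lt (Polynomial.degree_sum_le _ _)
      apply Finset.sup_lt_iff (WithBot.bot_lt_coe n) |>.mpr
      intro i hi
      apply lt_of_le_of_lt (degree_mul_le _ _)
      have h1 : (C (a' i)).degree ≤ 0 := degree_C_le
      have h2 : (X ^ (n - i) : (reesAlgebra I)[X]).degree ≤ (n - i : ℕ) := degree_X_pow_le _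
      calc (C (a' i)).degree + (X ^ (n - i) : (reesAlgebra I)[X]).degree
          ≤ 0 + (n - i : ℕ) := add_le_add h1 h2
        _ = ((n - i : ℕ) : WithBot ℕ) := zero_add _
        _ < (n : WithBot ℕ) := by
            have hi1 := (Finset.mem_Icc.mp hi).1
            have hi2 := (Finset.mem_Icc.mp hi).2
            exact_mod_cast Nat.sub_lt hn hi1
    · rw [← aeval_def]
      have hterm : ∀ i ∈ Finset.Icc 1 n,
          (aeval (monomial 1 x : S[X])) (C (a' i) * X ^ (n - i))
            = monomial n (a i * x ^ (n - i)) := by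
        intro i hi
        have hval : ((algebraMap (reesAlgebra I) S[X]) (a' i)) = monomial i (a i) := by
          rw [ha']; simp only [dif_pos hi]; rfl
        rw [aeval_mul, map_pow, aeval_X, aeval_C, hval, monomial_pow, one_mul,
          monomial_mul_monomial, Nat.add_sub_cancel' (Finset.mem_Icc.mp hi).2]
      have hsum : (aeval (monomial 1 x : S[X])) (∑ i ∈ Finset.Icc 1 n, C (a' i) * X ^ (n - i))
          = ∑ i ∈ Finset.Icc 1 n, monomial n (a i * x ^ (n - i)) := by
        rw [map_sum]; exact Finset.sum_congr rfl hterm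
      rw [map_add, map_pow, aeval_X, hsum, monomial_pow, one_mul,
        ← map_sum (monomial n : S →ₗ[S] S[X]), ← map_add, heq, map_zero]
  · rintro ⟨p, hmonic, heval⟩
    by_cases hS : Subsingleton S
    · exact ⟨1, one_pos, fun _ => 0, fun _ _ => zero_mem _, Subsingleton.elim _ _⟩
    have : Nontrivial S := not_subsingleton_iff_nontrivial.mp hS
    set n := p.natDegree with hn
    have hn0 : 0 < n := by
      rcases Nat.eq_zero_or_pos n with h0 | h
      · exfalso
        have hp1 : p = 1 := (Polynomial.Monic.natDegree_eq_zero hmonic).mp h0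
        rw [hp1, ← aeval_def, map_one] at heval
        exact one_ne_zero heval
      · exact h
    refine ⟨n, hn0, fun i => ((p.coeff (n - i) : S[X])).coeff i, fun i hi => ?_, ?_⟩
    · exact (p.coeff (n - i)).2 i
    · have hexp : (0 : S[X]) = ∑ k ∈ Finset.range (n + 1),
          ((p.coeff k : S[X])) * (monomial 1 x : S[X]) ^ k := by
        rw [← heval, ← aeval_def, Polynomial.aeval_eq_sum_range]
        exact Finset.sum_congr rfl fun k _ => by rw [Algebra.smul_def]; rfl
      have hco := congrArg (fun q : S[X] => q.coeff n) hexp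
      simp only [Polynomial.coeff_zero, Polynomial.finset_sum_coeff] at hco
      have hterm : ∀ k ∈ Finset.range (n + 1),
          (((p.coeff k : S[X])) * (monomial 1 x : S[X]) ^ k).coeff n
            = ((p.coeff k : S[X])).coeff (n - k) * x ^ k := by
        intro k hk
        have hkn : k ≤ n := Nat.lt_succ_iff.mp (Finset.mem_range.mp hk)
        rw [monomial_pow, one_mul]
        have := Polynomial.coeff_mul_monomial ((p.coeff k : S[X])) k (n - k) (x ^ k)
        rwa [Nat.sub_add_cancel hkn] at this
      rw [Finset.sum_congr rfl hterm, Finset.sum_range_succ] at hco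
      have hlead : ((p.coeff n : S[X])).coeff (n - n) * x ^ n = x ^ n := by
        rw [hn, Polynomial.Monic.coeff_natDegree hmonic]
        simp
      rw [hlead] at hco
      have hre : ∑ i ∈ Finset.Icc 1 n, ((p.coeff (n - i) : S[X])).coeff i * x ^ (n - i)
          = ∑ k ∈ Finset.range n, ((p.coeff k : S[X])).coeff (n - k) * x ^ k := by
        refine Finset.sum_nbij' (fun i => n - i) (fun k => n - k) ?_ ?_ ?_ ?_ ?_
        · intro i hi
          exact Finset.mem_range.mpr (Nat.sub_lt hn0 (Finset.mem_Icc.mp hi).1)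
        · intro k hk
          refine Finset.mem_Icc.mpr ⟨?_, Nat.sub_le _ _⟩
          exact Nat.one_le_iff_ne_zero.mpr (Nat.sub_ne_zero_of_lt (Finset.mem_range.mp hk))
        · intro i hi
          exact Nat.sub_sub_self (Finset.mem_Icc.mp hi).2
        · intro k hk
          exact Nat.sub_sub_self (Nat.le_of_lt (Finset.mem_range.mp hk))
        · intro i hi
          rw [Nat.sub_sub_self (Finset.mem_Icc.mp hi).2]
      rw [hre, add_comm]
      exact hco.symm

theorem Ideal.intClosure_add_mem {S : Type*} [CommRing S] {I : Ideal S} {x y : S}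
    (hx : x ∈ I.intClosure) (hy : y ∈ I.intClosure) : x + y ∈ I.intClosure := by
  rw [Ideal.mem_intClosure_iff] at hx hy ⊢
  rw [map_add]
  exact hx.add hy

theorem Ideal.intClosure_mul_mem {S : Type*} [CommRing S] {I : Ideal S} (s : S) {x : S}
    (hx : x ∈ I.intClosure) : s * x ∈ I.intClosure := by
  rw [Ideal.mem_intClosure_iff] at hx ⊢
  rw [← C_mul_monomial]
  have hCs : (C s : S[X]) ∈ reesAlgebra I := by
    simpa using Subalgebra.algebraMap_mem (reesAlgebra I) s
  have hC : IsIntegral (reesAlgebra I) (C s : S[X]) := by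
    have : (C s : S[X]) = algebraMap (reesAlgebra I) S[X] ⟨C s, hCs⟩ := rfl
    rw [this]
    exact isIntegral_algebraMap
  exact hC.mul hx

theorem Ideal.intClosure_map {S T : Type*} [CommRing S] [CommRing T] (f : S →+* T)
    {I : Ideal S} {x : S} (hx : x ∈ I.intClosure) {J : Ideal T} (hIJ : I.map f ≤ J) :
    f x ∈ J.intClosure := by
  obtain ⟨n, hn, a, ha, heq⟩ := hx
  refine ⟨n, hn, fun i => f (a i), fun i hi => ?_, ?_⟩
  · have hle : (I ^ i).map f ≤ J ^ i := by
      rw [Ideal.map_pow]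
      exact Ideal.pow_right_mono hIJ i
    exact hle (Ideal.mem_map_of_mem f (ha i hi))
  · have h := congrArg f heq
    simpa [map_add, map_pow, map_sum, map_mul] using h

end helpers

variable (R A B : Type*) [CommRing R] [CommRing A] [CommRing B]
  [Algebra R A] [Algebra R B] [Algebra A B] [IsScalarTower R A B]

/-- The diagonal map `b ↦ b ⊗ 1 - 1 ⊗ b`. -/
noncomputable def lipDelta (b : B) : B ⊗[R] B := b ⊗ₜ[R] 1 - 1 ⊗ₜ[R] b

/-- The canonical morphism `B ⊗[R] B → B ⊗[A] B`. -/
noncomputable def lipPhi : B ⊗[R] B →ₐ[R] B ⊗[A] B :=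
  Algebra.TensorProduct.lift
    ((Algebra.TensorProduct.includeLeft : B →ₐ[A] B ⊗[A] B).restrictScalars R)
    ((Algebra.TensorProduct.includeRight : B →ₐ[A] B ⊗[A] B).restrictScalars R)
    (fun _ _ => Commute.all _ _)

/-- The relative Lipschitz saturation of `A` in `B` over `R`. -/
noncomputable def lipSat : Set B :=
  {x | lipDelta R B x ∈ (RingHom.ker (lipPhi R A B)).intClosure}

theorem lipPhi_tmul (x y : B) : lipPhi R A B (x ⊗ₜ[R] y) = x ⊗ₜ[A] y := by
  simp only [lipPhi, Algebra.TensorProduct.lift_tmul, AlgHom.coe_restrictScalars',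
    Algebra.TensorProduct.includeLeft_apply, Algebra.TensorProduct.includeRight_apply,
    Algebra.TensorProduct.tmul_mul_tmul, one_mul, mul_one]

theorem lipDelta_zero : lipDelta R B 0 = 0 := by simp [lipDelta]

theorem lipDelta_add (x y : B) :
    lipDelta R B (x + y) = lipDelta R B x + lipDelta R B y := by
  simp only [lipDelta, TensorProduct.add_tmul, TensorProduct.tmul_add]
  ring

theorem tmul_one_swap {R' T : Type*} [CommRing R'] [CommRing T] [Algebra R' T] (c : R') :
    (algebraMap R' T c) ⊗ₜ[R'] (1 : T) = (1 : T) ⊗ₜ[R'] (algebraMap R' T c) := by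
  rw [Algebra.algebraMap_eq_smul_one, TensorProduct.smul_tmul,
    ← Algebra.algebraMap_eq_smul_one]

attribute [local instance] Algebra.TensorProduct.rightAlgebra

set_option maxHeartbeats 1000000 in
set_option synthInstance.maxHeartbeats 400000 in
/-- Flat base change: if `R'` is a flat `R`-algebra, the image of `A*_{B,R} ⊗_R R'`
in `B ⊗_R R'` is contained in `(A ⊗_R R')*_{B ⊗_R R', R'}`, where the algebra
structure of `B ⊗_R R'` over `A ⊗_R R'` is the induced one `g ⊗ id`. -/
theorem lipSat_flat_base_change (R' : Type*) [CommRing R'] [Algebra R R']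
    [Module.Flat R R']
    [Algebra (A ⊗[R] R') (B ⊗[R] R')]
    (halg : algebraMap (A ⊗[R] R') (B ⊗[R] R') =
      (Algebra.TensorProduct.map (IsScalarTower.toAlgHom R A B)
        (AlgHom.id R R')).toRingHom)
    (htower : ∀ r : R', algebraMap R' (B ⊗[R] R') r =
      algebraMap (A ⊗[R] R') (B ⊗[R] R') (algebraMap R' (A ⊗[R] R') r)) :
    ∀ z ∈ Submodule.span R'
        {w : B ⊗[R] R' | ∃ x ∈ lipSat R A B, ∃ y : R', w = x ⊗ₜ[R] y},
      z ∈ @lipSat R' (A ⊗[R] R') (B ⊗[R] R') _ _ _ _ _ _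
        (IsScalarTower.of_algebraMap_eq htower) := by
  letI : IsScalarTower R' (A ⊗[R] R') (B ⊗[R] R') := IsScalarTower.of_algebraMap_eq htower
  intro z hz
  -- Notation
  set T := B ⊗[R] R' with hTdef
  set A' := A ⊗[R] R' with hA'def
  -- the base change morphism Ψ : B ⊗[R] B → T ⊗[R'] T
  let f₁ : B →ₐ[R] T ⊗[R'] T :=
    { toRingHom := (Algebra.TensorProduct.includeLeftRingHom :
        T →+* T ⊗[R'] T).comp (Algebra.TensorProduct.includeLeftRingHom : B →+* T)
      commutes' := by
        intro r
        show ((algebraMap R B r) ⊗ₜ[R] (1 : R')) ⊗ₜ[R'] (1 : T) = _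
        rw [Algebra.TensorProduct.algebraMap_apply (R := R') (r : R),
          Algebra.TensorProduct.algebraMap_apply] }
  let f₂ : B →ₐ[R] T ⊗[R'] T :=
    { toRingHom := ((Algebra.TensorProduct.includeRight : T →ₐ[R'] T ⊗[R'] T) :
        T →+* T ⊗[R'] T).comp (Algebra.TensorProduct.includeLeftRingHom : B →+* T)
      commutes' := by
        intro r
        show (1 : T) ⊗ₜ[R'] ((algebraMap R B r) ⊗ₜ[R] (1 : R')) = _
        rw [Algebra.TensorProduct.algebraMap_apply (R := R') (r : R),
          Algebra.TensorProduct.algebraMap_apply,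
          ← Algebra.TensorProduct.algebraMap_apply (R := R) (r : R),
          IsScalarTower.algebraMap_apply R R' T, tmul_one_swap] }
  let Ψ : B ⊗[R] B →+* T ⊗[R'] T :=
    (Algebra.TensorProduct.lift f₁ f₂ (fun _ _ => Commute.all _ _)).toRingHom
  have hΨ_tmul : ∀ b b' : B, Ψ (b ⊗ₜ[R] b') = (b ⊗ₜ[R] (1:R')) ⊗ₜ[R'] (b' ⊗ₜ[R] (1:R')) := by
    intro b b'
    show Algebra.TensorProduct.lift f₁ f₂ (fun _ _ => Commute.all _ _) (b ⊗ₜ[R] b') = _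
    rw [Algebra.TensorProduct.lift_tmul]
    show ((b ⊗ₜ[R] (1:R')) ⊗ₜ[R'] (1:T)) * ((1:T) ⊗ₜ[R'] (b' ⊗ₜ[R] (1:R'))) = _
    rw [Algebra.TensorProduct.tmul_mul_tmul, one_mul, mul_one]
  -- The generating set of relations
  set J : Ideal (B ⊗[R] B) :=
    Ideal.span {d : B ⊗[R] B | ∃ a : A, d = lipDelta R B (algebraMap A B a)} with hJdef
  -- Step A : ker (lipPhi R A B) ≤ J
  have hkerJ : RingHom.ker (lipPhi R A B) ≤ J := by
    let β₁ : B →ₐ[A] (B ⊗[R] B) ⧸ J :=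
      { toRingHom := (Ideal.Quotient.mk J).comp (Algebra.TensorProduct.includeLeftRingHom :
          B →+* B ⊗[R] B)
        commutes' := by
          intro a
          show Ideal.Quotient.mk J ((algebraMap A B a) ⊗ₜ[R] (1:B)) = _
          rw [← Algebra.TensorProduct.algebraMap_apply]
          rfl }
    let β₂ : B →ₐ[A] (B ⊗[R] B) ⧸ J :=
      { toRingHom := (Ideal.Quotient.mk J).comp
          ((Algebra.TensorProduct.includeRight : B →ₐ[R] B ⊗[R] B) : B →+* B ⊗[R] B)
        commutes' := by
          intro a
          show Ideal.Quotient.mk J ((1:B) ⊗ₜ[R] algebraMap A B a)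
            = Ideal.Quotient.mk J ((algebraMap A B a) ⊗ₜ[R] (1:B))
          rw [Ideal.Quotient.mk_eq_mk_iff_sub_mem]
          have hmem : lipDelta R B (algebraMap A B a) ∈ J :=
            Ideal.subset_span ⟨a, rfl⟩
          have : (1:B) ⊗ₜ[R] algebraMap A B a - (algebraMap A B a) ⊗ₜ[R] (1:B)
              = -(lipDelta R B (algebraMap A B a)) := by
            rw [lipDelta]; ring
          rw [this]
          exact neg_mem hmem }
    let β : B ⊗[A] B →ₐ[A] (B ⊗[R] B) ⧸ J :=
      Algebra.TensorProduct.lift β₁ β₂ (fun _ _ => Commute.all _ _)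
    have hfactor : ∀ w : B ⊗[R] B, β (lipPhi R A B w) = Ideal.Quotient.mk J w := by
      intro w
      induction w using TensorProduct.induction_on with
      | zero => simp
      | tmul b b' =>
        rw [lipPhi_tmul]
        show Algebra.TensorProduct.lift β₁ β₂ (fun _ _ => Commute.all _ _) (b ⊗ₜ[A] b') = _
        rw [Algebra.TensorProduct.lift_tmul]
        show (Ideal.Quotient.mk J (b ⊗ₜ[R] (1:B))) * (Ideal.Quotient.mk J ((1:B) ⊗ₜ[R] b')) = _
        rw [← map_mul, Algebra.TensorProduct.tmul_mul_tmul, one_mul, mul_one]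
      | add u v hu hv => rw [map_add, map_add, hu, hv, map_add]
    intro w hw
    have h0 : lipPhi R A B w = 0 := hw
    have := hfactor w
    rw [h0, map_zero] at this
    exact (Ideal.Quotient.eq_zero_iff_mem).mp this.symm
  -- Step B : Ψ maps the generators of J into ker (lipPhi R' A' T)
  have hgen : ∀ a : A, Ψ (lipDelta R B (algebraMap A B a)) ∈
      RingHom.ker (lipPhi R' A' T) := by
    intro a
    have ht : (algebraMap A B a) ⊗ₜ[R] (1:R') = algebraMap A' T (a ⊗ₜ[R] (1:R')) := by
      rw [halg]
      show _ = (Algebra.TensorProduct.map (IsScalarTower.toAlgHom R A B) (AlgHom.id R R')) (a ⊗ₜ[R] (1:R'))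
      rw [Algebra.TensorProduct.map_tmul]
      rfl
    rw [RingHom.mem_ker, lipDelta, map_sub, hΨ_tmul, hΨ_tmul, map_sub,
      lipPhi_tmul, lipPhi_tmul]
    have hone : ((1:B) ⊗ₜ[R] (1:R')) = (1 : T) := rfl
    rw [hone, ht, tmul_one_swap, sub_self]
  -- Step C : Ψ maps ker (lipPhi R A B) into ker (lipPhi R' A' T)
  have hker : (RingHom.ker (lipPhi R A B)).map Ψ ≤ RingHom.ker (lipPhi R' A' T) := by
    rw [Ideal.map_le_iff_le_comap]
    refine le_trans hkerJ ?_
    rw [hJdef, Ideal.span_le]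
    rintro d ⟨a, rfl⟩
    exact hgen a
  -- lipDelta commutes with Ψ on elements of the form x ⊗ 1
  have hdelta_comm : ∀ x : B,
      lipDelta R' T (x ⊗ₜ[R] (1:R')) = Ψ (lipDelta R B x) := by
    intro x
    rw [lipDelta, lipDelta, map_sub, hΨ_tmul, hΨ_tmul]
    rfl
  -- membership is preserved under the module operations
  have hsmul_mem : ∀ (c : R') (t : B ⊗[R] R'),
      lipDelta R' T t ∈ (RingHom.ker (lipPhi R' A' T)).intClosure →
      lipDelta R' T (c • t) ∈ (RingHom.ker (lipPhi R' A' T)).intClosure := by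
    intro c t ht
    have : lipDelta R' T (c • t) = algebraMap R' (T ⊗[R'] T) c * lipDelta R' T t := by
      rw [lipDelta, lipDelta, mul_sub, ← Algebra.smul_def, ← Algebra.smul_def,
        TensorProduct.smul_tmul', ← TensorProduct.tmul_smul]
    rw [this]
    exact Ideal.intClosure_mul_mem _ ht
  -- main span induction
  refine Submodule.span_induction ?_ ?_ ?_ ?_ hz
  · rintro w ⟨x, hx, y, rfl⟩
    show lipDelta R' T (x ⊗ₜ[R] y) ∈ (RingHom.ker (lipPhi R' A' T)).intClosure
    have hxy : x ⊗ₜ[R] y = y • (x ⊗ₜ[R] (1:R')) := by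
      show _ = ((1:B) ⊗ₜ[R] y) * (x ⊗ₜ[R] (1:R'))
      rw [Algebra.TensorProduct.tmul_mul_tmul, one_mul, mul_one]
    rw [hxy]
    apply hsmul_mem
    rw [hdelta_comm]
    exact Ideal.intClosure_map Ψ hx hker
  · show lipDelta R' T 0 ∈ (RingHom.ker (lipPhi R' A' T)).intClosure
    rw [lipDelta_zero]
    exact Ideal.zero_mem_intClosure _
  · intro u v _ _ hu hv
    show lipDelta R' T (u + v) ∈ (RingHom.ker (lipPhi R' A' T)).intClosure
    rw [lipDelta_add]
    exact Ideal.intClosure_add_mem hu hv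
  · intro c u _ hu
    exact hsmul_mem c u hu
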